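/- A c.e. subset A of ℕ is D-maximal and Type 6 if and only if A has an A-special list. -/

import Mathlib

open Set Function

/-- A set of naturals is computably enumerable (c.e.) -/
def CESet (A : Set ℕ) : Prop := REPred (· ∈ A)

/-- A set of naturals is computable -/
def ComputableSet (A : Set ℕ) : Prop := ComputablePred (· ∈ A)

/-- X ⊆* Y : X is almost contained in Y -/
def SubsetStar (X Y : Set ℕ) : Prop := (X \ Y).Finite

/-- X =* Y : X and Y differ by a finite set -/
def EqStar (X Y : Set ℕ) : Prop := (X \ Y).Finite ∧ (Y \ X).Finite

/-- G is a generating set for 𝒟(A): a countable family of c.e. sets, each disjoint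
from A, such that every c.e. set disjoint from A is almost covered by finitely many
members of G. -/
def Generates (A : Set ℕ) (G : Set (Set ℕ)) : Prop :=
  G.Countable ∧ (∀ X ∈ G, CESet X) ∧ (∀ X ∈ G, Disjoint X A) ∧
  ∀ D : Set ℕ, CESet D → Disjoint D A →
    ∃ F : Set (Set ℕ), F ⊆ G ∧ F.Finite ∧ SubsetStar D (⋃₀ F)

/-- S is simple -/
def SimpleSet (S : Set ℕ) : Prop :=
  CESet S ∧ Sᶜ.Infinite ∧ ∀ W : Set ℕ, CESet W → Disjoint W S → W.Finite

/-- A is 𝒟-maximal -/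
def DMaximal (A : Set ℕ) : Prop :=
  CESet A ∧ ∀ W : Set ℕ, CESet W → ∃ D : Set ℕ, CESet D ∧ Disjoint D A ∧
    (SubsetStar W (A ∪ D) ∨ EqStar (W ∪ A ∪ D) Set.univ)

/-- M is r-maximal -/
def RMaximal (M : Set ℕ) : Prop :=
  CESet M ∧ Mᶜ.Infinite ∧
    ∀ R : Set ℕ, ComputableSet R → (R ∩ Mᶜ).Finite ∨ (Rᶜ ∩ Mᶜ).Finite

/-- M is maximal -/
def MaximalSet (M : Set ℕ) : Prop :=
  CESet M ∧ Mᶜ.Infinite ∧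
    ∀ W : Set ℕ, CESet W → M ⊆ W → (W \ M).Finite ∨ Wᶜ.Finite

/-- B is atomless -/
def AtomlessSet (B : Set ℕ) : Prop :=
  ∀ C : Set ℕ, CESet C → B ⊆ C → Cᶜ.Infinite →
    ∃ E : Set ℕ, CESet E ∧ SubsetStar C E ∧ (E \ C).Infinite ∧ Eᶜ.Infinite

/-- A0, A1 form a Friedberg splitting of A -/
def FriedbergSplitting (A0 A1 A : Set ℕ) : Prop :=
  CESet A0 ∧ CESet A1 ∧ Disjoint A0 A1 ∧ A0 ∪ A1 = A ∧
    ∀ W : Set ℕ, CESet W → ¬ CESet (W \ A) → ¬ CESet (W \ A0) ∧ ¬ CESet (W \ A1)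

/-- E is a major subset of D -/
def MajorIn (E D : Set ℕ) : Prop :=
  CESet E ∧ CESet D ∧ E ⊆ D ∧ (D \ E).Infinite ∧
    ∀ W : Set ℕ, CESet W → SubsetStar Dᶜ W → SubsetStar Eᶜ W

/-- H is hh-simple: the lattice of c.e. supersets of H mod finite is a boolean algebra -/
def HHSimple (H : Set ℕ) : Prop :=
  CESet H ∧ Hᶜ.Infinite ∧
    ∀ W : Set ℕ, CESet W → ∃ V : Set ℕ, CESet V ∧
      EqStar ((W ∪ H) ∩ (V ∪ H)) H ∧ EqStar (W ∪ V ∪ H) Set.univ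

/-- A is strongly r-separable -/
def StronglyRSeparable (A : Set ℕ) : Prop :=
  ∀ B : Set ℕ, CESet B → Disjoint B A →
    ∃ C : Set ℕ, ComputableSet C ∧ B ⊆ C ∧ Disjoint C A ∧ (C \ B).Infinite

/-- Structure of a Type 5 generating family: D0 together with the R_i. -/
def Type5Family (D0 : Set ℕ) (R : ℕ → Set ℕ) : Prop :=
  CESet D0 ∧ ¬ ComputableSet D0 ∧ D0.Infinite ∧
  Function.Injective R ∧ (∀ i, D0 ≠ R i) ∧
  (∀ i, ComputableSet (R i) ∧ (R i).Infinite) ∧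
  Pairwise (Function.onFun Disjoint R) ∧
  (∀ i, Disjoint D0 (R i))

/-- Structure of a Type 7 generating family: D0 together with the R_i. -/
def Type7Family (D0 : Set ℕ) (R : ℕ → Set ℕ) : Prop :=
  CESet D0 ∧ ¬ ComputableSet D0 ∧
  Function.Injective R ∧ (∀ i, D0 ≠ R i) ∧
  (∀ i, ComputableSet (R i) ∧ (R i).Infinite) ∧
  Pairwise (Function.onFun Disjoint R) ∧
  {i : ℕ | (D0 ∩ R i).Nonempty}.Infinite

/-- Structure of a Type 8 generating family: the D_i together with the R_i. -/
def Type8Family (D R : ℕ → Set ℕ) : Prop :=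
  Function.Injective D ∧ Function.Injective R ∧ (∀ i j, D i ≠ R j) ∧
  (∀ i, CESet (D i) ∧ ¬ ComputableSet (D i)) ∧
  Pairwise (Function.onFun Disjoint D) ∧
  (∀ i, ComputableSet (R i) ∧ (R i).Infinite) ∧
  Pairwise (Function.onFun Disjoint R)

/-- Structure of a Type 9 generating family: the nested D_i together with the R_i. -/
def Type9Family (D R : ℕ → Set ℕ) : Prop :=
  Function.Injective R ∧ (∀ i j, D i ≠ R j) ∧
  (∀ i, ComputableSet (R i) ∧ (R i).Infinite) ∧
  Pairwise (Function.onFun Disjoint R) ∧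
  (∀ i, CESet (D i) ∧ ¬ ComputableSet (D i) ∧ (D i).Infinite) ∧
  (∀ l, D l ⊆ D (l + 1)) ∧
  (∀ l, ¬ CESet (D (l + 1) \ D l)) ∧
  (∀ l, {j : ℕ | (R j \ D l).Infinite}.Infinite)

def IsType1 (G : Set (Set ℕ)) : Prop := G = {∅}

def IsType2 (G : Set (Set ℕ)) : Prop :=
  ∃ R : Set ℕ, G = {R} ∧ ComputableSet R ∧ R.Infinite

def IsType3 (G : Set (Set ℕ)) : Prop :=
  ∃ W : Set ℕ, G = {W} ∧ CESet W ∧ ¬ ComputableSet W ∧ W.Infinite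

def IsType4 (G : Set (Set ℕ)) : Prop :=
  ∃ R : ℕ → Set ℕ, G = Set.range R ∧ Function.Injective R ∧
    (∀ i, ComputableSet (R i) ∧ (R i).Infinite) ∧
    Pairwise (Function.onFun Disjoint R)

def IsType5 (G : Set (Set ℕ)) : Prop :=
  ∃ (D0 : Set ℕ) (R : ℕ → Set ℕ), G = insert D0 (Set.range R) ∧ Type5Family D0 R

def IsType6 (G : Set (Set ℕ)) : Prop :=
  ∃ D : ℕ → Set ℕ, G = Set.range D ∧ Function.Injective D ∧
    (∀ i, CESet (D i) ∧ ¬ ComputableSet (D i) ∧ (D i).Infinite) ∧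
    Pairwise (Function.onFun Disjoint D)

def IsType7 (G : Set (Set ℕ)) : Prop :=
  ∃ (D0 : Set ℕ) (R : ℕ → Set ℕ), G = insert D0 (Set.range R) ∧ Type7Family D0 R

def IsType8 (G : Set (Set ℕ)) : Prop :=
  ∃ D R : ℕ → Set ℕ, G = Set.range D ∪ Set.range R ∧ Type8Family D R

def IsType9 (G : Set (Set ℕ)) : Prop :=
  ∃ D R : ℕ → Set ℕ, G = Set.range D ∪ Set.range R ∧ Type9Family D R

def IsType10 (G : Set (Set ℕ)) : Prop :=
  ∃ D : ℕ → Set ℕ, G = Set.range D ∧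
    (∀ i, CESet (D i) ∧ ¬ ComputableSet (D i) ∧ (D i).Infinite) ∧
    (∀ l, D l ⊆ D (l + 1)) ∧
    (∀ l, ¬ CESet (D (l + 1) \ D l))

/-- G is a generating set of Type n (n = 1, …, 10). -/
def GenTypeN (n : ℕ) (G : Set (Set ℕ)) : Prop :=
  match n with
  | 1 => IsType1 G
  | 2 => IsType2 G
  | 3 => IsType3 G
  | 4 => IsType4 G
  | 5 => IsType5 G
  | 6 => IsType6 G
  | 7 => IsType7 G
  | 8 => IsType8 G
  | 9 => IsType9 G
  | 10 => IsType10 G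
  | _ => False

/-- The c.e. set A is of Type n: 𝒟(A) has a generating set of Type n
but no generating set of any Type m < n. -/
def SetOfType (A : Set ℕ) (n : ℕ) : Prop :=
  (∃ G : Set (Set ℕ), Generates A G ∧ GenTypeN n G) ∧
  ∀ m : ℕ, m < n → ¬ ∃ G : Set (Set ℕ), Generates A G ∧ GenTypeN m G

/-- (F_i) is an A-special list. -/
def ASpecialList (A : Set ℕ) (F : ℕ → Set ℕ) : Prop :=
  F 0 = A ∧ (∀ i, CESet (F i) ∧ ¬ ComputableSet (F i)) ∧
  Pairwise (Function.onFun Disjoint F) ∧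
  ∀ W : Set ℕ, CESet W → ∃ i : ℕ,
    SubsetStar W (⋃ l ≤ i, F l) ∨ EqStar (W ∪ ⋃ l ≤ i, F l) Set.univ


lemma RePred.or' {p q : ℕ → Prop} (hp : REPred p) (hq : REPred q) :
    REPred fun a => p a ∨ q a := by
  obtain ⟨k, hk, H⟩ := Partrec.merge' hp hq
  refine hk.dom_re.of_eq fun a => ?_
  rw [(H a).2]
  simp [Part.assert, Part.Dom]

lemma RePred.and' {p q : ℕ → Prop} (hp : REPred p) (hq : REPred q) :
    REPred fun a => p a ∧ q a := by
  have h : Partrec fun a => (Part.assert (p a) fun _ => Part.some ()).bind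
      fun _ => Part.assert (q a) fun _ => Part.some () :=
    hp.bind (hq.comp Computable.fst)
  refine h.dom_re.of_eq fun a => ?_
  constructor
  · rintro ⟨h1, h2⟩
    exact ⟨h1.1, h2.1⟩
  · rintro ⟨h1, h2⟩
    exact ⟨⟨h1, trivial⟩, h2, trivial⟩

lemma ceSet_union {X Y : Set ℕ} (hX : CESet X) (hY : CESet Y) : CESet (X ∪ Y) :=
  (RePred.or' hX hY).of_eq fun a => (Set.mem_union a X Y).symm

lemma computableSet_compl {X : Set ℕ} (hX : ComputableSet X) : ComputableSet Xᶜ :=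
  (ComputablePred.not hX).of_eq fun a => Iff.rfl

lemma computableSet_union {X Y : Set ℕ} (hX : ComputableSet X) (hY : ComputableSet Y) :
    ComputableSet (X ∪ Y) := by
  obtain ⟨f, hf, hpf⟩ := ComputablePred.computable_iff.1 hX
  obtain ⟨g, hg, hpg⟩ := ComputablePred.computable_iff.1 hY
  refine ComputablePred.computable_iff.2 ⟨fun a => f a || g a, ?_, ?_⟩
  · exact Computable₂.comp (Primrec.or.to_comp) hf hg
  · funext a
    have h1 : a ∈ X ↔ f a = true := iff_of_eq (congrFun hpf a)
    have h2 : a ∈ Y ↔ g a = true := iff_of_eq (congrFun hpg a)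
    simp [Set.mem_union, h1, h2]

lemma computableSet_empty : ComputableSet (∅ : Set ℕ) := by
  refine ComputablePred.computable_iff.2 ⟨fun _ => false, Computable.const false, ?_⟩
  funext a; simp

lemma computableSet_singleton (a : ℕ) : ComputableSet ({a} : Set ℕ) := by
  refine ComputablePred.computable_iff.2 ⟨fun n => decide (n = a), ?_, ?_⟩
  · exact Primrec.to_comp (Primrec.eq.comp Primrec.id (Primrec.const a)).decide
  · funext n; simp

lemma computableSet_of_finite {S : Set ℕ} (h : S.Finite) : ComputableSet S := by
  refine Set.Finite.induction_on (motive := fun S _ => ComputableSet S) _ h computableSet_empty ?_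
  intro a s _ _ ih
  rw [Set.insert_eq]
  exact computableSet_union (computableSet_singleton a) ih

lemma ceSet_empty : CESet (∅ : Set ℕ) := computableSet_empty.to_re

lemma ceSet_of_finite {S : Set ℕ} (h : S.Finite) : CESet S := (computableSet_of_finite h).to_re

lemma ceSet_diff_computable {X S : Set ℕ} (hX : CESet X) (hS : ComputableSet S) :
    CESet (X \ S) :=
  (RePred.and' hX ((ComputablePred.not hS).to_re)).of_eq fun a => Iff.rfl

lemma ceSet_diff_finite {X S : Set ℕ} (hX : CESet X) (hS : S.Finite) : CESet (X \ S) :=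
  ceSet_diff_computable hX (computableSet_of_finite hS)

lemma ceSet_of_eqStar {X Y : Set ℕ} (hY : CESet Y) (h : EqStar X Y) : CESet X := by
  have hXY : X = (Y ∪ (X \ Y)) \ (Y \ X) := by
    ext x
    constructor
    · intro hx
      by_cases hy : x ∈ Y
      · exact ⟨Or.inl hy, fun hc => hc.2 hx⟩
      · exact ⟨Or.inr ⟨hx, hy⟩, fun hc => hc.2 hx⟩
    · rintro ⟨(hy | hxy), hny⟩
      · by_contra hx; exact hny ⟨hy, hx⟩
      · exact hxy.1
  rw [hXY]
  exact ceSet_diff_finite (ceSet_union hY (ceSet_of_finite h.1)) h.2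

lemma computableSet_iff {X : Set ℕ} : ComputableSet X ↔ CESet X ∧ CESet Xᶜ := by
  rw [ComputableSet, ComputablePred.computable_iff_re_compl_re']
  exact and_congr Iff.rfl ⟨fun h => h.of_eq fun a => Iff.rfl, fun h => h.of_eq fun a => Iff.rfl⟩

lemma eqStar_compl {X Y : Set ℕ} (h : EqStar X Y) : EqStar Xᶜ Yᶜ := by
  constructor
  · exact h.2.subset fun x hx => ⟨by simpa using hx.2, hx.1⟩
  · exact h.1.subset fun x hx => ⟨by simpa using hx.2, hx.1⟩

lemma subsetStar_trans {X Y Z : Set ℕ} (h1 : SubsetStar X Y) (h2 : SubsetStar Y Z) :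
    SubsetStar X Z := by
  refine (h1.union h2).subset fun x hx => ?_
  by_cases hy : x ∈ Y
  · exact Or.inr ⟨hy, hx.2⟩
  · exact Or.inl ⟨hx.1, hy⟩

lemma subsetStar_of_subset {X Y : Set ℕ} (h : X ⊆ Y) : SubsetStar X Y := by
  have : X \ Y = ∅ := Set.diff_eq_empty.2 h
  rw [SubsetStar, this]; exact Set.finite_empty

lemma subsetStar_union_left {X Y Z : Set ℕ} (h1 : SubsetStar X Z) (h2 : SubsetStar Y Z) :
    SubsetStar (X ∪ Y) Z := by
  rw [SubsetStar, Set.union_diff_distrib]; exact h1.union h2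

lemma computableSet_sUnion {Fam : Set (Set ℕ)} (hfin : Fam.Finite)
    (h : ∀ X ∈ Fam, ComputableSet X) : ComputableSet (⋃₀ Fam) := by
  refine Set.Finite.induction_on
    (motive := fun Fam _ => (∀ X ∈ Fam, ComputableSet X) → ComputableSet (⋃₀ Fam)) _ hfin ?_ ?_ h
  · intro _; rw [Set.sUnion_empty]; exact computableSet_empty
  · intro X s _ _ ih hall
    rw [Set.sUnion_insert]
    exact computableSet_union (hall X (Set.mem_insert X s))
      (ih fun Y hY => hall Y (Set.mem_insert_of_mem X hY))

lemma subsetStar_sUnion_cover {V : ℕ → Set ℕ} (hV : Monotone V) {Fam : Set (Set ℕ)}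
    (hfin : Fam.Finite) (h : ∀ X ∈ Fam, ∃ i, SubsetStar X (V i)) :
    ∃ m, SubsetStar (⋃₀ Fam) (V m) := by
  refine Set.Finite.induction_on
    (motive := fun Fam _ => (∀ X ∈ Fam, ∃ i, SubsetStar X (V i)) → ∃ m, SubsetStar (⋃₀ Fam) (V m))
    _ hfin ?_ ?_ h
  · intro _
    exact ⟨0, by rw [Set.sUnion_empty]; exact subsetStar_of_subset (Set.empty_subset _)⟩
  · intro X s _ _ ih hall
    obtain ⟨i, hi⟩ := hall X (Set.mem_insert X s)
    obtain ⟨m, hm⟩ := ih fun Y hY => hall Y (Set.mem_insert_of_mem X hY)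
    refine ⟨max i m, ?_⟩
    rw [Set.sUnion_insert]
    exact subsetStar_union_left
      (subsetStar_trans hi (subsetStar_of_subset (hV (le_max_left i m))))
      (subsetStar_trans hm (subsetStar_of_subset (hV (le_max_right i m))))

/-- The union F 1 ∪ ... ∪ F i. -/
def Useg (F : ℕ → Set ℕ) (i : ℕ) : Set ℕ := ⋃ l ∈ Set.Icc 1 i, F l

lemma useg_mono {F : ℕ → Set ℕ} : Monotone (Useg F) := fun i j hij =>
  Set.biUnion_subset_biUnion_left (Set.Icc_subset_Icc_right hij)

lemma useg_succ {F : ℕ → Set ℕ} (i : ℕ) : Useg F (i + 1) = Useg F i ∪ F (i + 1) := by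
  have : Set.Icc 1 (i + 1) = insert (i + 1) (Set.Icc 1 i) := by
    ext x; simp [Set.mem_Icc]; omega
  rw [Useg, this, Set.biUnion_insert, Useg, Set.union_comm]

lemma ceSet_useg {F : ℕ → Set ℕ} (h : ∀ l, CESet (F l)) (i : ℕ) : CESet (Useg F i) := by
  induction i with
  | zero =>
      have : Useg F 0 = ∅ := by
        rw [Useg]; simp [Set.Icc_eq_empty_of_lt]
      rw [this]; exact ceSet_empty
  | succ i ih => rw [useg_succ]; exact ceSet_union ih (h (i + 1))

lemma mem_useg {F : ℕ → Set ℕ} {i x : ℕ} : x ∈ Useg F i ↔ ∃ l, 1 ≤ l ∧ l ≤ i ∧ x ∈ F l := by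
  simp [Useg, Set.mem_Icc]
  tauto

lemma useg_disjoint_zero {F : ℕ → Set ℕ} (hd : Pairwise (Function.onFun Disjoint F)) (i : ℕ) :
    Disjoint (Useg F i) (F 0) := by
  rw [Set.disjoint_left]
  intro x hx hx0
  obtain ⟨l, hl1, _, hxl⟩ := mem_useg.1 hx
  exact Set.disjoint_left.1 (hd (by omega : l ≠ 0)) hxl hx0

lemma disjoint_useg_of_gt {F : ℕ → Set ℕ} (hd : Pairwise (Function.onFun Disjoint F)) {n i : ℕ}
    (hni : i < n) : Disjoint (F n) (Useg F i) := by
  rw [Set.disjoint_left]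
  intro x hx hxu
  obtain ⟨l, _, hl2, hxl⟩ := mem_useg.1 hxu
  exact Set.disjoint_left.1 (hd (by omega : n ≠ l)) hx hxl

lemma union_useg {F : ℕ → Set ℕ} (i : ℕ) : F 0 ∪ Useg F i = ⋃ l ≤ i, F l := by
  ext x
  simp only [Set.mem_union, mem_useg, Set.mem_iUnion]
  constructor
  · rintro (h0 | ⟨l, h1, h2, hx⟩)
    · exact ⟨0, Nat.zero_le i, h0⟩
    · exact ⟨l, h2, hx⟩
  · rintro ⟨l, hl, hx⟩
    rcases Nat.eq_zero_or_pos l with rfl | hpos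
    · exact Or.inl hx
    · exact Or.inr ⟨l, hpos, hl, hx⟩

-- AUXEND

lemma ceSet_sUnion {Fam : Set (Set ℕ)} (hfin : Fam.Finite)
    (h : ∀ X ∈ Fam, CESet X) : CESet (⋃₀ Fam) := by
  refine Set.Finite.induction_on
    (motive := fun Fam _ => (∀ X ∈ Fam, CESet X) → CESet (⋃₀ Fam)) _ hfin ?_ ?_ h
  · intro _; rw [Set.sUnion_empty]; exact ceSet_empty
  · intro X s _ _ ih hall
    rw [Set.sUnion_insert]
    exact ceSet_union (hall X (Set.mem_insert X s))
      (ih fun Y hY => hall Y (Set.mem_insert_of_mem X hY))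

lemma ceSet_biUnion {s : Set ℕ} (hs : s.Finite) {F : ℕ → Set ℕ} (h : ∀ l, CESet (F l)) :
    CESet (⋃ l ∈ s, F l) := by
  rw [← Set.sUnion_image]
  exact ceSet_sUnion (hs.image F) (by rintro X ⟨l, -, rfl⟩; exact h l)

lemma infinite_of_not_computable {X : Set ℕ} (h : ¬ ComputableSet X) : X.Infinite := by
  by_contra hfin
  rw [Set.not_infinite] at hfin
  exact h (computableSet_of_finite hfin)

lemma keyK {A : Set ℕ} {F : ℕ → Set ℕ} (hF : ASpecialList A F) {W : Set ℕ}
    (hW : CESet W) (hdis : Disjoint W A) : ∃ i, SubsetStar W (Useg F i) := by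
  obtain ⟨hF0, hce, hd, hlist⟩ := hF
  obtain ⟨i, hcase | hcase⟩ := hlist W hW
  · refine ⟨i, hcase.subset ?_⟩
    intro x hx
    refine ⟨hx.1, fun hc => ?_⟩
    rw [← union_useg] at hc
    rcases hc with h0 | hu
    · exact Set.disjoint_left.1 hdis hx.1 (hF0 ▸ h0)
    · exact hx.2 hu
  · exfalso
    have hAc : CESet Aᶜ := by
      refine ceSet_of_eqStar (ceSet_union hW (ceSet_useg (fun l => (hce l).1) i)) ?_
      constructor
      · refine hcase.2.subset ?_
        intro x hx
        refine ⟨trivial, fun hc => ?_⟩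
        rcases hc with hW' | hU
        · exact hx.2 (Or.inl hW')
        · rw [← union_useg] at hU
          rcases hU with h0 | hu
          · exact hx.1 (hF0 ▸ h0)
          · exact hx.2 (Or.inr hu)
      · have : (W ∪ Useg F i) \ Aᶜ = ∅ := by
          rw [Set.diff_eq_empty]
          rintro x (hxW | hxU)
          · intro hxA
            exact Set.disjoint_left.1 hdis hxW hxA
          · intro hxA
            exact Set.disjoint_left.1 (useg_disjoint_zero hd i) hxU (hF0.symm ▸ hxA)
        rw [this]; exact Set.finite_empty
    exact (hce 0).2 (computableSet_iff.2 ⟨(hce 0).1, hF0 ▸ hAc⟩)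

lemma keyC {A : Set ℕ} {F : ℕ → Set ℕ} (hF : ASpecialList A F) {n : ℕ} (hn : 1 ≤ n)
    {U : Set ℕ} (hU : ComputableSet U) {m : ℕ}
    (h1 : SubsetStar (F n) U) (h2 : SubsetStar U (Useg F m)) : False := by
  obtain ⟨hF0, hce, hd, _⟩ := hF
  set M := max m n with hM
  set E : Set ℕ := ⋃ l ∈ {l : ℕ | 1 ≤ l ∧ l ≤ M ∧ l ≠ n}, F l with hE
  have memE : ∀ x, x ∈ E ↔ ∃ l, 1 ≤ l ∧ l ≤ M ∧ l ≠ n ∧ x ∈ F l := by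
    intro x
    simp only [hE, Set.mem_iUnion, Set.mem_setOf_eq, exists_prop]
    constructor
    · rintro ⟨l, ⟨ha, hb, hc⟩, hx⟩; exact ⟨l, ha, hb, hc, hx⟩
    · rintro ⟨l, ha, hb, hc, hx⟩; exact ⟨l, ⟨ha, hb, hc⟩, hx⟩
  have hEce : CESet E := by
    have hfin : {l : ℕ | 1 ≤ l ∧ l ≤ M ∧ l ≠ n}.Finite :=
      (Set.finite_Icc 1 M).subset fun l hl => Set.mem_Icc.2 ⟨hl.1, hl.2.1⟩
    exact ceSet_biUnion hfin (fun l => (hce l).1)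
  have hstar : EqStar (F n) (U \ E) := by
    constructor
    · refine h1.subset ?_
      intro x hx
      refine ⟨hx.1, fun hxU => ?_⟩
      have hxE : x ∈ E := by
        by_contra h
        exact hx.2 ⟨hxU, h⟩
      obtain ⟨l, _, _, hln, hxl⟩ := (memE x).1 hxE
      exact Set.disjoint_left.1 (hd (Ne.symm hln)) hx.1 hxl
    · refine h2.subset ?_
      intro x hx
      refine ⟨hx.1.1, fun hc => ?_⟩
      obtain ⟨l, hl1, hl2, hxl⟩ := mem_useg.1 hc
      have hln : l ≠ n := fun h => hx.2 (h ▸ hxl)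
      exact hx.1.2 ((memE x).2 ⟨l, hl1, le_trans hl2 (le_max_left m n), hln, hxl⟩)
  have hcompl : CESet (F n)ᶜ := by
    have hUE : (U \ E)ᶜ = Uᶜ ∪ E := by
      rw [Set.diff_eq, Set.compl_inter, compl_compl]
    refine ceSet_of_eqStar ?_ (eqStar_compl hstar)
    rw [hUE]
    exact ceSet_union (computableSet_compl hU).to_re hEce
  exact (hce n).2 (computableSet_iff.2 ⟨(hce n).1, hcompl⟩)


lemma exists_bound {D : ℕ → Set ℕ} {Fam : Set (Set ℕ)} (hfin : Fam.Finite)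
    (hsub : Fam ⊆ Set.range D) : ∃ i, ∀ X ∈ Fam, ∃ k, k ≤ i ∧ X = D k := by
  refine Set.Finite.induction_on
    (motive := fun Fam _ => Fam ⊆ Set.range D → ∃ i, ∀ X ∈ Fam, ∃ k, k ≤ i ∧ X = D k) _ hfin ?_ ?_ hsub
  · intro _; exact ⟨0, by simp⟩
  · intro X s _ _ ih hsub'
    obtain ⟨k, rfl⟩ := hsub' (Set.mem_insert X s)
    obtain ⟨i, hi⟩ := ih fun Y hY => hsub' (Set.mem_insert_of_mem _ hY)
    refine ⟨max k i, ?_⟩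
    rintro Y (rfl | hY)
    · exact ⟨k, le_max_left k i, rfl⟩
    · obtain ⟨k', hk', rfl⟩ := hi Y hY
      exact ⟨k', le_trans hk' (le_max_right k i), rfl⟩

theorem stmt_18 (A : Set ℕ) (hA : CESet A) :
    (DMaximal A ∧ SetOfType A 6) ↔ ∃ F : ℕ → Set ℕ, ASpecialList A F := by
  constructor
  · rintro ⟨hDmax, ⟨⟨G, hGen, hT6⟩, hNo⟩⟩
    have hT6' : IsType6 G := hT6
    obtain ⟨D, rfl, hDinj, hDprop, hDdisj⟩ := hT6'
    have hAnc : ¬ ComputableSet A := by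
      intro hAc
      by_cases hfin : Aᶜ.Finite
      · refine hNo 1 (by norm_num) ⟨{∅}, ⟨Set.countable_singleton _, ?_, ?_, ?_⟩, rfl⟩
        · rintro X hX
          rw [Set.mem_singleton_iff] at hX
          subst hX; exact ceSet_empty
        · rintro X hX
          rw [Set.mem_singleton_iff] at hX
          subst hX
          exact Set.disjoint_left.2 fun {x} hx => absurd hx (Set.notMem_empty x)
        · intro E hEce hEdisj
          refine ⟨∅, Set.empty_subset _, Set.finite_empty, ?_⟩
          rw [SubsetStar, Set.sUnion_empty, Set.diff_empty]
          exact hfin.subset fun x hx => Set.disjoint_left.1 hEdisj hx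
      · refine hNo 2 (by norm_num)
          ⟨{Aᶜ}, ⟨Set.countable_singleton _, ?_, ?_, ?_⟩, ⟨Aᶜ, rfl, computableSet_compl hAc, hfin⟩⟩
        · rintro X hX
          rw [Set.mem_singleton_iff] at hX
          subst hX; exact (computableSet_compl hAc).to_re
        · rintro X hX
          rw [Set.mem_singleton_iff] at hX
          subst hX; exact Set.disjoint_left.2 fun {x} hx hxA => hx hxA
        · intro E hEce hEdisj
          refine ⟨{Aᶜ}, subset_rfl, Set.finite_singleton _, ?_⟩
          rw [SubsetStar, Set.sUnion_singleton]
          have : E \ Aᶜ = ∅ := Set.diff_eq_empty.2 fun x hx => Set.disjoint_left.1 hEdisj hx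
          rw [this]; exact Set.finite_empty
    refine ⟨fun n => Nat.rec A (fun k _ => D k) n, rfl, ?_, ?_, ?_⟩
    · intro i
      cases i with
      | zero => exact ⟨hA, hAnc⟩
      | succ k => exact ⟨(hDprop k).1, (hDprop k).2.1⟩
    · intro i j hij
      match i, j with
      | 0, 0 => exact absurd rfl hij
      | 0, k+1 => exact (hGen.2.2.1 (D k) ⟨k, rfl⟩).symm
      | k+1, 0 => exact hGen.2.2.1 (D k) ⟨k, rfl⟩
      | k+1, l+1 => exact hDdisj (fun h => hij (by rw [h]))
    · intro W hW
      obtain ⟨E, hEce, hEdisj, hcase⟩ := hDmax.2 W hW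
      obtain ⟨Fam, hsub, hfin, hcov⟩ := hGen.2.2.2 E hEce hEdisj
      obtain ⟨i, hi⟩ := exists_bound hfin hsub
      set F : ℕ → Set ℕ := fun n => Nat.rec A (fun k _ => D k) n with hFdef
      have hFamU : ⋃₀ Fam ⊆ Useg F (i+1) := by
        rintro x ⟨Y, hY, hxY⟩
        obtain ⟨k, hk, rfl⟩ := hi Y hY
        exact mem_useg.2 ⟨k+1, by omega, by omega, hxY⟩
      have hAsub : A ⊆ ⋃ l ≤ i+1, F l := by
        rw [← union_useg]
        exact Set.subset_union_left
      have hEsub : SubsetStar E (⋃ l ≤ i+1, F l) := by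
        refine subsetStar_trans hcov (subsetStar_of_subset (hFamU.trans ?_))
        rw [← union_useg]
        exact Set.subset_union_right
      refine ⟨i+1, ?_⟩
      rcases hcase with hc | hc
      · left
        exact subsetStar_trans hc (subsetStar_union_left (subsetStar_of_subset hAsub) hEsub)
      · right
        constructor
        · rw [Set.diff_univ]; exact Set.finite_empty
        · refine (hc.2.union hEsub).subset ?_
          intro x hx
          by_cases hxE : x ∈ W ∪ A ∪ E
          · rcases hxE with (hxW | hxA) | hxe
            · exact absurd (Or.inl hxW) hx.2
            · exact absurd (Or.inr (hAsub hxA)) hx.2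
            · refine Or.inr ⟨hxe, fun hc' => hx.2 (Or.inr hc')⟩
          · exact Or.inl ⟨trivial, hxE⟩
  · rintro ⟨F, hF⟩
    obtain ⟨hF0, hce, hd, hlist⟩ := id hF
    have hAnc : ¬ ComputableSet A := hF0 ▸ (hce 0).2
    have hUseA : ∀ i, A ∪ Useg F i = ⋃ l ≤ i, F l := fun i => by
      rw [← hF0]; exact union_useg i
    have hUsegce : ∀ i, CESet (Useg F i) := ceSet_useg fun l => (hce l).1
    have hUsegdisj : ∀ i, Disjoint (Useg F i) A := fun i => hF0 ▸ useg_disjoint_zero hd i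
    have hDmax : DMaximal A := by
      refine ⟨hA, fun W hW => ?_⟩
      obtain ⟨i, hcase⟩ := hlist W hW
      refine ⟨Useg F i, hUsegce i, hUsegdisj i, ?_⟩
      rcases hcase with hc | hc
      · left; rw [hUseA i]; exact hc
      · right; rw [Set.union_assoc, hUseA i]; exact hc
    have hsing : ∀ X : Set ℕ, Generates A {X} → False := by
      intro X hG
      obtain ⟨i, hi⟩ := keyK hF (hG.2.1 X rfl) (hG.2.2.1 X rfl)
      obtain ⟨Fam, hsub, _, hcov⟩ :=
        hG.2.2.2 (F (i+1)) (hce (i+1)).1 (hF0 ▸ hd (Nat.succ_ne_zero i))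
      have hFamX : ⋃₀ Fam ⊆ X := by
        rintro x ⟨Y, hY, hxY⟩
        rwa [Set.mem_singleton_iff.1 (hsub hY)] at hxY
      have h1 : SubsetStar (F (i+1)) (Useg F i) :=
        subsetStar_trans (subsetStar_trans hcov (subsetStar_of_subset hFamX)) hi
      have hfin : (F (i+1)).Finite := by
        refine h1.subset fun x hx => ⟨hx, fun hc => ?_⟩
        exact Set.disjoint_left.1 (disjoint_useg_of_gt hd (Nat.lt_succ_self i)) hx hc
      exact (hce (i+1)).2 (computableSet_of_finite hfin)
    refine ⟨hDmax, ⟨⟨Set.range (fun k => F (k+1)), ⟨Set.countable_range _, ?_, ?_, ?_⟩, ?_⟩, ?_⟩⟩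
    · rintro X ⟨k, rfl⟩; exact (hce (k+1)).1
    · rintro X ⟨k, rfl⟩; exact hF0 ▸ hd (Nat.succ_ne_zero k)
    · intro E hEce hEdisj
      obtain ⟨i, hi⟩ := keyK hF hEce hEdisj
      refine ⟨F '' Set.Icc 1 i, ?_, (Set.finite_Icc 1 i).image F, ?_⟩
      · rintro X ⟨l, hl, rfl⟩
        exact ⟨l - 1, show F (l - 1 + 1) = F l by rw [Nat.sub_add_cancel hl.1]⟩
      · rw [Set.sUnion_image]; exact hi
    · refine ⟨fun k => F (k+1), rfl, ?_, ?_, ?_⟩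
      · intro a b hab
        by_contra hne
        have hdis : Disjoint (F (a+1)) (F (b+1)) := hd (fun h => hne (Nat.succ_injective h))
        have hab' : F (a+1) = F (b+1) := hab
        rw [hab'] at hdis
        have : F (b+1) = ∅ := disjoint_self.1 hdis
        exact (hce (b+1)).2 (computableSet_of_finite (this ▸ Set.finite_empty))
      · exact fun k => ⟨(hce (k+1)).1, (hce (k+1)).2,
          infinite_of_not_computable (hce (k+1)).2⟩
      · exact fun a b hab => hd (fun h => hab (Nat.succ_injective h))
    · rintro m hm ⟨G, hGen, hTm⟩
      interval_cases m
      · exact hTm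
      · have h1 : IsType1 G := hTm
        rw [IsType1] at h1
        subst h1
        exact hsing ∅ hGen
      · obtain ⟨R, rfl, -, -⟩ := (hTm : IsType2 G)
        exact hsing R hGen
      · obtain ⟨W, rfl, -, -, -⟩ := (hTm : IsType3 G)
        exact hsing W hGen
      · obtain ⟨R, rfl, hRinj, hRprop, hRdisj⟩ := (hTm : IsType4 G)
        obtain ⟨Fam, hsub, hfin, hcov⟩ :=
          hGen.2.2.2 (F 1) (hce 1).1 (hF0 ▸ hd Nat.one_ne_zero)
        have hUcomp : ComputableSet (⋃₀ Fam) := by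
          refine computableSet_sUnion hfin fun X hX => ?_
          obtain ⟨j, rfl⟩ := hsub hX
          exact (hRprop j).1
        obtain ⟨m', hm'⟩ := subsetStar_sUnion_cover useg_mono hfin
          (fun X hX => keyK hF (hGen.2.1 X (hsub hX)) (hGen.2.2.1 X (hsub hX)))
        exact keyC hF le_rfl hUcomp hcov hm'
      · obtain ⟨D0, R, rfl, hfam⟩ := (hTm : IsType5 G)
        have hD0mem : D0 ∈ insert D0 (Set.range R) := Set.mem_insert _ _
        obtain ⟨a, ha⟩ := keyK hF hfam.1 (hGen.2.2.1 _ hD0mem)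
        obtain ⟨Fam, hsub, hfin, hcov⟩ :=
          hGen.2.2.2 (F (a+1)) (hce (a+1)).1 (hF0 ▸ hd (Nat.succ_ne_zero a))
        have hsub' : Fam \ {D0} ⊆ Set.range R := by
          rintro X ⟨hX, hne⟩
          rcases hsub hX with h | h
          · exact absurd h hne
          · exact h
        have hUcomp : ComputableSet (⋃₀ (Fam \ {D0})) := by
          refine computableSet_sUnion hfin.diff fun X hX => ?_
          obtain ⟨j, rfl⟩ := hsub' hX
          exact (hfam.2.2.2.2.2.1 j).1
        have h1 : SubsetStar (F (a+1)) (⋃₀ (Fam \ {D0})) := by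
          refine (hcov.union ha).subset ?_
          intro x hx
          by_cases hxF : x ∈ ⋃₀ Fam
          · right
            have hxD0 : x ∈ D0 := by
              obtain ⟨Y, hY, hxY⟩ := hxF
              by_cases hYD : Y = D0
              · exact hYD ▸ hxY
              · exact absurd ⟨Y, ⟨hY, hYD⟩, hxY⟩ hx.2
            refine ⟨hxD0, fun hc => ?_⟩
            exact Set.disjoint_left.1 (disjoint_useg_of_gt hd (Nat.lt_succ_self a)) hx.1 hc
          · exact Or.inl ⟨hx.1, hxF⟩
        obtain ⟨m', hm'⟩ := subsetStar_sUnion_cover useg_mono hfin.diff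
          (fun X hX => keyK hF (hGen.2.1 X (hsub hX.1)) (hGen.2.2.1 X (hsub hX.1)))
        exact keyC hF (Nat.succ_le_succ (Nat.zero_le a)) hUcomp h1 hm'
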